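/- arXiv:2107.04395 — 2 statements merged into one kernel-verified Lean document; each statement's English description precedes it below -/
import Mathlib

section
/- Let φ, ψ : E → ℝ be twice continuously differentiable with ψ convex. If for all x ∈ E and all directions z ∈ E one has ⟨∇²φ(x)[z], z⟩ ≤ L⟨∇²ψ(x)[z], z⟩, then φ(x) − φ(y) − ⟨∇φ(y), x−y⟩ ≤ L·D_ψ(x,y) for all x, y ∈ E. -/
theorem stmt6 {E : Type*} [NormedAddCommGroup E] [InnerProductSpace ℝ E]
    [FiniteDimensional ℝ E]
    (φ ψ : E → ℝ) (φ' ψ' : E → E) (φ'' ψ'' : E → E →L[ℝ] E) (L : ℝ)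
    (hφsm : ContDiff ℝ 2 φ) (hψsm : ContDiff ℝ 2 ψ)
    (hψconv : ConvexOn ℝ Set.univ ψ)
    (hφd : ∀ x, HasGradientAt φ (φ' x) x)
    (hψd : ∀ x, HasGradientAt ψ (ψ' x) x)
    (hφdd : ∀ x, HasFDerivAt φ' (φ'' x) x)
    (hψdd : ∀ x, HasFDerivAt ψ' (ψ'' x) x)
    (hhess : ∀ x z : E, (inner ℝ (φ'' x z) z : ℝ) ≤ L * (inner ℝ (ψ'' x z) z : ℝ)) :
    ∀ x y : E, φ x - φ y - (inner ℝ (φ' y) (x - y) : ℝ) ≤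
      L * (ψ x - ψ y - (inner ℝ (ψ' y) (x - y) : ℝ)) := by
  intro x y
  set v := x - y with hv
  set p : ℝ → E := fun t => y + t • v with hp
  have hpd : ∀ t : ℝ, HasDerivAt p v t := by
    intro t
    exact ((hasDerivAt_const t y).add ((hasDerivAt_id t).smul_const v)).congr_deriv (by simp)
  have hφp : ∀ t, HasDerivAt (fun t => φ (p t)) (inner ℝ (φ' (p t)) v : ℝ) t := by
    intro t
    have h := ((hφd (p t)).hasFDerivAt).comp_hasDerivAt t (hpd t)
    simp at h
    exact h
  have hψp : ∀ t, HasDerivAt (fun t => ψ (p t)) (inner ℝ (ψ' (p t)) v : ℝ) t := by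
    intro t
    have h := ((hψd (p t)).hasFDerivAt).comp_hasDerivAt t (hpd t)
    simp at h
    exact h
  set G : ℝ → ℝ := fun t => L * (inner ℝ (ψ' (p t)) v : ℝ) - (inner ℝ (φ' (p t)) v : ℝ) with hG
  set g : ℝ → ℝ := fun t => L * ψ (p t) - φ (p t) with hg
  have hgd : ∀ t, HasDerivAt g (G t) t := fun t =>
    ((hψp t).const_mul L).sub (hφp t)
  have hApd : ∀ t, HasDerivAt (fun t => (inner ℝ (φ' (p t)) v : ℝ)) (inner ℝ (φ'' (p t) v) v : ℝ) t := by
    intro t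
    have h1 : HasDerivAt (fun t => φ' (p t)) (φ'' (p t) v) t :=
      (hφdd (p t)).comp_hasDerivAt t (hpd t)
    simpa using h1.inner ℝ (hasDerivAt_const t v)
  have hBpd : ∀ t, HasDerivAt (fun t => (inner ℝ (ψ' (p t)) v : ℝ)) (inner ℝ (ψ'' (p t) v) v : ℝ) t := by
    intro t
    have h1 : HasDerivAt (fun t => ψ' (p t)) (ψ'' (p t) v) t :=
      (hψdd (p t)).comp_hasDerivAt t (hpd t)
    simpa using h1.inner ℝ (hasDerivAt_const t v)
  have hGd : ∀ t, HasDerivAt G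
      (L * (inner ℝ (ψ'' (p t) v) v : ℝ) - (inner ℝ (φ'' (p t) v) v : ℝ)) t := fun t =>
    ((hBpd t).const_mul L).sub (hApd t)
  have hGmono : Monotone G := by
    apply monotone_of_deriv_nonneg (fun t => (hGd t).differentiableAt)
    intro t
    rw [(hGd t).deriv]
    have := hhess (p t) v
    linarith
  obtain ⟨c, hc, hceq⟩ := exists_hasDerivAt_eq_slope g G one_pos
    (fun t _ => (hgd t).continuousAt.continuousWithinAt) (fun t _ => hgd t)
  have hmono : G 0 ≤ G c := hGmono hc.1.le
  have hp0 : p 0 = y := by simp [hp]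
  have hp1 : p 1 = x := by simp [hp, hv]
  have hslope : G c = g 1 - g 0 := by
    rw [hceq]; ring
  have hkey : G 0 ≤ g 1 - g 0 := hslope ▸ hmono
  have hkey2 : L * (inner ℝ (ψ' y) v : ℝ) - (inner ℝ (φ' y) v : ℝ) ≤
      (L * ψ x - φ x) - (L * ψ y - φ y) := by
    simpa only [hG, hg, hp0, hp1] using hkey
  linarith
end

section
/- Let f(V) = (1/2)‖X − UV‖_F² + (λ/2)‖I_r − VVᵀ‖_F² and φ₂(V) = (6λ/4)‖V‖_F⁴ + (ε/2)‖V‖_F² with ε = max(‖UᵀU‖, 2λ). Then for all V, Z: ⟨∇²f(V)[Z], Z⟩ ≤ ⟨∇²φ₂(V)[Z], Z⟩ and ⟨∇²f(V)[Z], Z⟩ + ⟨∇²φ₂(V)[Z], Z⟩ ≥ 0. Consequently f is (1,1)-relative smooth to φ₂. -/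
open Matrix

/-- Frobenius inner product `⟨A, B⟩ = trace (Aᵀ B)`. -/
def finner {m n : ℕ} (A B : Matrix (Fin m) (Fin n) ℝ) : ℝ := (Aᵀ * B).trace

/-- Squared Frobenius norm. -/
def fnormsq {m n : ℕ} (A : Matrix (Fin m) (Fin n) ℝ) : ℝ := finner A A

namespace StmtAux

lemma tr4_cyc {a b c d : ℕ} (A : Matrix (Fin a) (Fin b) ℝ) (B : Matrix (Fin b) (Fin c) ℝ)
    (C : Matrix (Fin c) (Fin d) ℝ) (D : Matrix (Fin d) (Fin a) ℝ) :
    (A*(B*(C*D))).trace = (B*(C*(D*A))).trace := by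
  rw [Matrix.trace_mul_comm]; simp [Matrix.mul_assoc]

lemma tr4_transpose {a b c d : ℕ} (A : Matrix (Fin a) (Fin b) ℝ) (B : Matrix (Fin b) (Fin c) ℝ)
    (C : Matrix (Fin c) (Fin d) ℝ) (D : Matrix (Fin d) (Fin a) ℝ) :
    (A*(B*(C*D))).trace = (Dᵀ*(Cᵀ*(Bᵀ*Aᵀ))).trace := by
  rw [← Matrix.trace_transpose]
  simp [Matrix.transpose_mul, Matrix.mul_assoc]

lemma tr2_transpose {a b : ℕ} (A : Matrix (Fin a) (Fin b) ℝ) (B : Matrix (Fin b) (Fin a) ℝ) :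
    (A*B).trace = (Bᵀ*Aᵀ).trace := by
  rw [← Matrix.trace_transpose, transpose_mul]

variable {m n r : ℕ}

lemma finner_eq_sum (A B : Matrix (Fin m) (Fin n) ℝ) :
    finner A B = ∑ i, ∑ j, A i j * B i j := by
  simp [finner, Matrix.trace, Matrix.diag, Matrix.mul_apply]
  rw [Finset.sum_comm]

lemma fnormsq_nonneg (A : Matrix (Fin m) (Fin n) ℝ) : 0 ≤ fnormsq A := by
  rw [fnormsq, finner_eq_sum]
  exact Finset.sum_nonneg fun i _ => Finset.sum_nonneg fun j _ => mul_self_nonneg _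

lemma finner_sq_le (A B : Matrix (Fin m) (Fin n) ℝ) :
    (finner A B) ^ 2 ≤ fnormsq A * fnormsq B := by
  classical
  rw [fnormsq, fnormsq, finner_eq_sum, finner_eq_sum, finner_eq_sum]
  have h := Finset.sum_mul_sq_le_sq_mul_sq (Finset.univ ×ˢ Finset.univ)
      (fun p : Fin m × Fin n => A p.1 p.2) (fun p => B p.1 p.2)
  rw [Finset.sum_product, Finset.sum_product, Finset.sum_product] at h
  simpa [pow_two] using h

lemma fnormsq_mul_le (A : Matrix (Fin m) (Fin n) ℝ) (B : Matrix (Fin n) (Fin r) ℝ) :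
    fnormsq (A * B) ≤ fnormsq A * fnormsq B := by
  classical
  rw [fnormsq, finner_eq_sum, fnormsq, finner_eq_sum, fnormsq, finner_eq_sum]
  have h : ∀ i k, (A * B) i k * (A * B) i k ≤ (∑ j, A i j * A i j) * (∑ j, B j k * B j k) := by
    intro i k
    have := Finset.sum_mul_sq_le_sq_mul_sq Finset.univ (fun j => A i j) (fun j => B j k)
    simpa [Matrix.mul_apply, pow_two] using this
  calc (∑ i, ∑ k, (A * B) i k * (A * B) i k)
      ≤ ∑ i, ∑ k, (∑ j, A i j * A i j) * (∑ j, B j k * B j k) := by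
        apply Finset.sum_le_sum; intro i _; apply Finset.sum_le_sum; intro k _; exact h i k
    _ = (∑ i, ∑ j, A i j * A i j) * (∑ k, ∑ j, B j k * B j k) := by
        simp_rw [← Finset.mul_sum]; rw [← Finset.sum_mul]
    _ = (∑ i, ∑ j, A i j * A i j) * (∑ j, ∑ k, B j k * B j k) := by
        rw [Finset.sum_comm (f := fun k j => B j k * B j k)]

lemma fnormsq_transpose (A : Matrix (Fin m) (Fin n) ℝ) : fnormsq Aᵀ = fnormsq A := by
  rw [fnormsq, finner_eq_sum, fnormsq, finner_eq_sum, Finset.sum_comm]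
  simp [Matrix.transpose_apply]

lemma colform (M : Matrix (Fin r) (Fin r) ℝ) (Z : Matrix (Fin r) (Fin n) ℝ) :
    finner (M * Z) Z = ∑ j, (fun i => Z i j) ⬝ᵥ M.mulVec (fun i => Z i j) := by
  rw [finner_eq_sum, Finset.sum_comm]
  simp only [dotProduct, Matrix.mulVec, Matrix.mul_apply]
  exact Finset.sum_congr rfl fun j _ => Finset.sum_congr rfl fun i _ => mul_comm _ _

lemma colsq (Z : Matrix (Fin r) (Fin n) ℝ) :
    fnormsq Z = ∑ j, (fun i => Z i j) ⬝ᵥ (fun i => Z i j) := by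
  rw [fnormsq, finner_eq_sum, Finset.sum_comm]
  simp only [dotProduct]

lemma facts (U : Matrix (Fin m) (Fin r) ℝ) (V Z : Matrix (Fin r) (Fin n) ℝ)
    (lam s eps : ℝ) (hlam : 0 < lam)
    (hs : ∀ u : Fin r → ℝ, u ⬝ᵥ (Uᵀ * U).mulVec u ≤ s * (u ⬝ᵥ u))
    (hse : s ≤ eps) (hle : 2*lam ≤ eps) :
    (finner (Uᵀ*U*Z + (2*lam) • (Z*Vᵀ*V + V*Zᵀ*V + V*Vᵀ*Z - Z)) Z
      ≤ finner ((6*lam) • (fnormsq V • Z + (2*finner V Z) • V) + eps • Z) Z)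
    ∧ (0 ≤ finner (Uᵀ*U*Z + (2*lam) • (Z*Vᵀ*V + V*Zᵀ*V + V*Vᵀ*Z - Z)) Z
        + finner ((6*lam) • (fnormsq V • Z + (2*finner V Z) • V) + eps • Z) Z) := by
  have ha : (0:ℝ) ≤ (Vᵀ * V).trace := fnormsq_nonneg V
  have hc : (0:ℝ) ≤ (Zᵀ * Z).trace := fnormsq_nonneg Z
  have hU1 : (Zᵀ * (Uᵀ * (U * Z))).trace ≤ s * (Zᵀ * Z).trace := by
    have h := colform (Uᵀ * U) Z
    simp only [finner, transpose_mul, transpose_transpose, Matrix.mul_assoc] at h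
    rw [h, show ((Zᵀ * Z).trace : ℝ) = fnormsq Z from rfl, colsq, Finset.mul_sum]
    exact Finset.sum_le_sum fun j _ => hs _
  have hU0 : (0:ℝ) ≤ (Zᵀ * (Uᵀ * (U * Z))).trace := by
    have h : fnormsq (U * Z) = (Zᵀ * (Uᵀ * (U * Z))).trace := by
      simp [fnormsq, finner, transpose_mul, Matrix.mul_assoc]
    rw [← h]; exact fnormsq_nonneg _
  have hT1e : (Vᵀ * (V * (Zᵀ * Z))).trace = fnormsq (V * Zᵀ) := by
    have : fnormsq (V * Zᵀ) = (Z*(Vᵀ*(V*Zᵀ))).trace := by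
      simp [fnormsq, finner, transpose_mul, transpose_transpose, Matrix.mul_assoc]
    rw [this, tr4_cyc, tr4_cyc, tr4_cyc]
  have hT1b : fnormsq (V * Zᵀ) ≤ (Vᵀ * V).trace * (Zᵀ * Z).trace := by
    calc fnormsq (V * Zᵀ) ≤ fnormsq V * fnormsq Zᵀ := fnormsq_mul_le _ _
      _ = (Vᵀ * V).trace * (Zᵀ * Z).trace := by rw [fnormsq_transpose]; rfl
  have hT10 : 0 ≤ fnormsq (V * Zᵀ) := fnormsq_nonneg _
  have hT3e : (Zᵀ * (V * (Vᵀ * Z))).trace = fnormsq (Vᵀ * Z) := by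
    simp [fnormsq, finner, transpose_mul, transpose_transpose, Matrix.mul_assoc]
  have hT3b : fnormsq (Vᵀ * Z) ≤ (Vᵀ * V).trace * (Zᵀ * Z).trace := by
    calc fnormsq (Vᵀ * Z) ≤ fnormsq Vᵀ * fnormsq Z := fnormsq_mul_le _ _
      _ = (Vᵀ * V).trace * (Zᵀ * Z).trace := by rw [fnormsq_transpose]; rfl
  have hT30 : 0 ≤ fnormsq (Vᵀ * Z) := fnormsq_nonneg _
  have hMe : (Vᵀ * (Z * (Vᵀ * Z))).trace = finner (Zᵀ * V) (Vᵀ * Z) := by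
    simp [finner, transpose_mul, transpose_transpose, Matrix.mul_assoc]
  have hMsq : (finner (Zᵀ * V) (Vᵀ * Z))^2 ≤ (fnormsq (Vᵀ * Z))^2 := by
    have h := finner_sq_le (Zᵀ * V) (Vᵀ * Z)
    have ht : fnormsq (Zᵀ * V) = fnormsq (Vᵀ * Z) := by
      rw [← fnormsq_transpose (Zᵀ * V)]; simp [transpose_mul, transpose_transpose]
    rw [ht] at h; nlinarith [h]
  have hMle : finner (Zᵀ * V) (Vᵀ * Z) ≤ fnormsq (Vᵀ * Z) := by nlinarith [hMsq, hT30]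
  have hMge : -(fnormsq (Vᵀ * Z)) ≤ finner (Zᵀ * V) (Vᵀ * Z) := by nlinarith [hMsq, hT30]
  have hb2 : (0:ℝ) ≤ ((Vᵀ * Z).trace)^2 := sq_nonneg _
  constructor
  · simp only [finner, fnormsq, transpose_add, transpose_sub, transpose_mul, transpose_smul,
      transpose_transpose, Matrix.add_mul, Matrix.sub_mul, Matrix.smul_mul, Matrix.mul_smul,
      Matrix.trace_add, Matrix.trace_sub, Matrix.trace_smul, smul_eq_mul, Matrix.mul_assoc,
      smul_add, smul_sub, smul_smul]
    rw [hT1e, hMe, hT3e]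
    nlinarith [mul_le_mul_of_nonneg_left hT1b hlam.le, mul_le_mul_of_nonneg_left hT3b hlam.le,
      mul_le_mul_of_nonneg_left hMle hlam.le, mul_le_mul_of_nonneg_right hse hc,
      mul_le_mul_of_nonneg_right hle hc, hU1, hb2, hlam, hc, ha]
  · simp only [finner, fnormsq, transpose_add, transpose_sub, transpose_mul, transpose_smul,
      transpose_transpose, Matrix.add_mul, Matrix.sub_mul, Matrix.smul_mul, Matrix.mul_smul,
      Matrix.trace_add, Matrix.trace_sub, Matrix.trace_smul, smul_eq_mul, Matrix.mul_assoc,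
      smul_add, smul_sub, smul_smul]
    rw [hT1e, hMe, hT3e]
    nlinarith [mul_le_mul_of_nonneg_left hMge hlam.le, hU0, hT10, hT30, hT3b,
      mul_le_mul_of_nonneg_left hT3b hlam.le, mul_le_mul_of_nonneg_right hle hc,
      hb2, hlam, hc, ha, mul_nonneg hlam.le (mul_nonneg ha hc)]

lemma bregman_f (U : Matrix (Fin m) (Fin r) ℝ) (X : Matrix (Fin m) (Fin n) ℝ)
    (lam t₁ t₂ : ℝ) (h1 : t₁ + t₂ = 2/3) (h2 : t₁ * t₂ = 1/18)
    (V W : Matrix (Fin r) (Fin n) ℝ) :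
    ((1/2) * fnormsq (X - U*(V+W)) + lam/2 * fnormsq ((1 : Matrix (Fin r) (Fin r) ℝ) - (V+W)*(V+W)ᵀ))
    - ((1/2) * fnormsq (X - U*V) + lam/2 * fnormsq ((1 : Matrix (Fin r) (Fin r) ℝ) - V*Vᵀ))
    - finner (Uᵀ*U*V - Uᵀ*X + (2*lam) • (V*Vᵀ*V - V)) W
    = (1/4) * ( finner (Uᵀ*U*W + (2*lam) • (W*(V+t₁•W)ᵀ*(V+t₁•W) + (V+t₁•W)*Wᵀ*(V+t₁•W) + (V+t₁•W)*(V+t₁•W)ᵀ*W - W)) W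
              + finner (Uᵀ*U*W + (2*lam) • (W*(V+t₂•W)ᵀ*(V+t₂•W) + (V+t₂•W)*Wᵀ*(V+t₂•W) + (V+t₂•W)*(V+t₂•W)ᵀ*W - W)) W ) := by
  have h1' : t₁^2 + t₂^2 = 1/3 := by nlinarith [h1, h2]
  simp only [finner, fnormsq, transpose_sub, transpose_add, transpose_mul, transpose_smul,
    transpose_transpose, transpose_one, Matrix.sub_mul, Matrix.mul_sub, Matrix.add_mul,
    Matrix.mul_add, Matrix.smul_mul, Matrix.mul_smul, Matrix.mul_one, Matrix.one_mul,
    Matrix.trace_add, Matrix.trace_sub, Matrix.trace_smul, smul_eq_mul, Matrix.mul_assoc,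
    smul_sub, smul_add, smul_smul]
  have d1 : (V*Wᵀ).trace = (Wᵀ*V).trace := Matrix.trace_mul_comm _ _
  have d2 : (W*Vᵀ).trace = (Wᵀ*V).trace := by
    rw [Matrix.trace_mul_comm, tr2_transpose, transpose_transpose]
  have d3 : (Vᵀ*W).trace = (Wᵀ*V).trace := by
    rw [tr2_transpose, transpose_transpose]
  have d4 : (W*Wᵀ).trace = (Wᵀ*W).trace := Matrix.trace_mul_comm _ _
  have u1 : (Xᵀ*(U*W)).trace = (Wᵀ*(Uᵀ*X)).trace := by
    rw [← Matrix.trace_transpose]; simp [transpose_mul, Matrix.mul_assoc]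
  have u2 : (Vᵀ*(Uᵀ*(U*W))).trace = (Wᵀ*(Uᵀ*(U*V))).trace := by
    rw [← Matrix.trace_transpose]; simp [transpose_mul, Matrix.mul_assoc]
  have e1 : (V*(Wᵀ*(V*Vᵀ))).trace = (Wᵀ*(V*(Vᵀ*V))).trace := by
    rw [tr4_cyc]
  have e2 : (W*(Vᵀ*(V*Vᵀ))).trace = (Wᵀ*(V*(Vᵀ*V))).trace := by
    rw [tr4_transpose]; simp only [transpose_transpose]; rw [tr4_cyc, tr4_cyc, tr4_cyc]
  have e3 : (W*(Wᵀ*(V*Vᵀ))).trace = (Wᵀ*(V*(Vᵀ*W))).trace := by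
    rw [tr4_cyc, tr4_cyc, tr4_cyc]
  have e4 : (V*(Vᵀ*(W*Vᵀ))).trace = (Wᵀ*(V*(Vᵀ*V))).trace := by
    rw [tr4_transpose]; simp only [transpose_transpose]; rw [tr4_cyc]
  have e5 : (V*(Wᵀ*(W*Vᵀ))).trace = (Vᵀ*(V*(Wᵀ*W))).trace := by
    rw [tr4_cyc, tr4_cyc, tr4_cyc]
  have e6 : (W*(Vᵀ*(W*Vᵀ))).trace = (Vᵀ*(W*(Vᵀ*W))).trace := by
    rw [tr4_cyc]
  have e7 : (W*(Wᵀ*(W*Vᵀ))).trace = (Vᵀ*(W*(Wᵀ*W))).trace := by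
    rw [tr4_cyc, tr4_cyc, tr4_cyc]
  have e8 : (V*(Vᵀ*(V*Wᵀ))).trace = (Wᵀ*(V*(Vᵀ*V))).trace := by
    rw [tr4_cyc, tr4_cyc, tr4_cyc]
  have e9 : (V*(Wᵀ*(V*Wᵀ))).trace = (Vᵀ*(W*(Vᵀ*W))).trace := by
    rw [tr4_transpose]; simp only [transpose_transpose]; rw [tr4_cyc]
  have e10 : (W*(Vᵀ*(V*Wᵀ))).trace = (Vᵀ*(V*(Wᵀ*W))).trace := by
    rw [tr4_cyc]
  have e11 : (W*(Wᵀ*(V*Wᵀ))).trace = (Vᵀ*(W*(Wᵀ*W))).trace := by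
    rw [tr4_transpose]; simp only [transpose_transpose]; rw [tr4_cyc, tr4_cyc]
  have e12 : (V*(Vᵀ*(W*Wᵀ))).trace = (Wᵀ*(V*(Vᵀ*W))).trace := by
    rw [tr4_cyc, tr4_cyc, tr4_cyc]
  have e13 : (V*(Wᵀ*(W*Wᵀ))).trace = (Vᵀ*(W*(Wᵀ*W))).trace := by
    rw [tr4_transpose]; simp only [transpose_transpose]; rw [tr4_cyc, tr4_cyc, tr4_cyc]
  have e14 : (W*(Vᵀ*(W*Wᵀ))).trace = (Vᵀ*(W*(Wᵀ*W))).trace := by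
    rw [tr4_cyc]
  have e15 : (W*(Wᵀ*(W*Wᵀ))).trace = (Wᵀ*(W*(Wᵀ*W))).trace := by
    rw [tr4_cyc]
  have e16 : (Vᵀ*(V*(Vᵀ*W))).trace = (Wᵀ*(V*(Vᵀ*V))).trace := by
    rw [tr4_transpose]; simp only [transpose_transpose]
  have e17 : (Wᵀ*(V*(Wᵀ*W))).trace = (Vᵀ*(W*(Wᵀ*W))).trace := by
    rw [tr4_transpose]; simp only [transpose_transpose]; rw [tr4_cyc, tr4_cyc]
  have e18 : (Wᵀ*(W*(Vᵀ*W))).trace = (Vᵀ*(W*(Wᵀ*W))).trace := by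
    rw [tr4_cyc, tr4_cyc]
  simp only [d1, d2, d3, d4, u1, u2, e1, e2, e3, e4, e5, e6, e7, e8, e9, e10, e11, e12, e13,
    e14, e15, e16, e17, e18]
  linear_combination (-3*lam*((Vᵀ*(W*(Wᵀ*W))).trace))*h1 + (-(3/2)*lam*((Wᵀ*(W*(Wᵀ*W))).trace))*h1'

lemma bregman_phi (lam eps t₁ t₂ : ℝ) (h1 : t₁ + t₂ = 2/3) (h2 : t₁ * t₂ = 1/18)
    (V W : Matrix (Fin r) (Fin n) ℝ) :
    (6*lam/4 * (fnormsq (V+W))^2 + eps/2 * fnormsq (V+W))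
    - (6*lam/4 * (fnormsq V)^2 + eps/2 * fnormsq V)
    - finner ((6*lam*fnormsq V) • V + eps • V) W
    = (1/4) * ( finner ((6*lam) • (fnormsq (V+t₁•W) • W + (2*finner (V+t₁•W) W) • (V+t₁•W)) + eps • W) W
              + finner ((6*lam) • (fnormsq (V+t₂•W) • W + (2*finner (V+t₂•W) W) • (V+t₂•W)) + eps • W) W ) := by
  have h1' : t₁^2 + t₂^2 = 1/3 := by nlinarith [h1, h2]
  simp only [finner, fnormsq, transpose_sub, transpose_add, transpose_mul, transpose_smul,
    transpose_transpose, Matrix.sub_mul, Matrix.mul_sub, Matrix.add_mul,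
    Matrix.mul_add, Matrix.smul_mul, Matrix.mul_smul,
    Matrix.trace_add, Matrix.trace_sub, Matrix.trace_smul, smul_eq_mul, Matrix.mul_assoc,
    smul_sub, smul_add, smul_smul]
  have d3 : (Vᵀ*W).trace = (Wᵀ*V).trace := by
    rw [tr2_transpose, transpose_transpose]
  simp only [d3]
  linear_combination (-9*lam*((Wᵀ*V).trace)*((Wᵀ*W).trace))*h1 + (-(9/2)*lam*((Wᵀ*W).trace)^2)*h1'

end StmtAux

theorem stmt11 {m n r : ℕ}
    (U : Matrix (Fin m) (Fin r) ℝ) (X : Matrix (Fin m) (Fin n) ℝ) (lam : ℝ) (hlam : 0 < lam)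
    (s : ℝ)
    (hs : ∀ u : Fin r → ℝ, u ⬝ᵥ (Uᵀ * U).mulVec u ≤ s * (u ⬝ᵥ u))
    (hs' : ∃ u : Fin r → ℝ, u ⬝ᵥ (Uᵀ * U).mulVec u = s * (u ⬝ᵥ u) ∧ u ⬝ᵥ u ≠ 0)
    (eps : ℝ) (heps : eps = max s (2 * lam))
    (f φ₂ : Matrix (Fin r) (Fin n) ℝ → ℝ)
    (hf : ∀ V, f V = (1 / 2) * fnormsq (X - U * V)
        + lam / 2 * fnormsq ((1 : Matrix (Fin r) (Fin r) ℝ) - V * Vᵀ))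
    (hφ : ∀ V, φ₂ V = 6 * lam / 4 * (fnormsq V) ^ 2 + eps / 2 * fnormsq V)
    (Hf Hφ : Matrix (Fin r) (Fin n) ℝ → Matrix (Fin r) (Fin n) ℝ → Matrix (Fin r) (Fin n) ℝ)
    (hHf : ∀ V Z, Hf V Z = Uᵀ * U * Z + (2 * lam) • (Z * Vᵀ * V + V * Zᵀ * V + V * Vᵀ * Z - Z))
    (hHφ : ∀ V Z, Hφ V Z = (6 * lam) • (fnormsq V • Z + (2 * finner V Z) • V) + eps • Z)
    (gradf gradφ : Matrix (Fin r) (Fin n) ℝ → Matrix (Fin r) (Fin n) ℝ)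
    (hgradf : ∀ V, gradf V = Uᵀ * U * V - Uᵀ * X + (2 * lam) • (V * Vᵀ * V - V))
    (hgradφ : ∀ V, gradφ V = (6 * lam * fnormsq V) • V + eps • V) :
    (∀ V Z : Matrix (Fin r) (Fin n) ℝ, finner (Hf V Z) Z ≤ finner (Hφ V Z) Z) ∧
    (∀ V Z : Matrix (Fin r) (Fin n) ℝ, 0 ≤ finner (Hf V Z) Z + finner (Hφ V Z) Z) ∧
    (∀ V V' : Matrix (Fin r) (Fin n) ℝ,
      -(φ₂ V' - φ₂ V - finner (gradφ V) (V' - V)) ≤ f V' - f V - finner (gradf V) (V' - V) ∧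
      f V' - f V - finner (gradf V) (V' - V) ≤ φ₂ V' - φ₂ V - finner (gradφ V) (V' - V)) := by
  have hse : s ≤ eps := by rw [heps]; exact le_max_left _ _
  have hle : 2 * lam ≤ eps := by rw [heps]; exact le_max_right _ _
  have part1 : ∀ V Z : Matrix (Fin r) (Fin n) ℝ, finner (Hf V Z) Z ≤ finner (Hφ V Z) Z := by
    intro V Z
    rw [hHf, hHφ]
    exact (StmtAux.facts U V Z lam s eps hlam hs hse hle).1
  have part2 : ∀ V Z : Matrix (Fin r) (Fin n) ℝ,
      0 ≤ finner (Hf V Z) Z + finner (Hφ V Z) Z := by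
    intro V Z
    rw [hHf, hHφ]
    exact (StmtAux.facts U V Z lam s eps hlam hs hse hle).2
  refine ⟨part1, part2, ?_⟩
  intro V V'
  set W := V' - V with hWdef
  have hW : V + W = V' := by rw [hWdef]; abel
  set t1 : ℝ := 1/3 - Real.sqrt 2/6 with ht1def
  set t2 : ℝ := 1/3 + Real.sqrt 2/6 with ht2def
  have hsum : t1 + t2 = 2/3 := by rw [ht1def, ht2def]; ring
  have hsq2 : Real.sqrt 2 ^ 2 = 2 := Real.sq_sqrt (by norm_num)
  have hprod : t1 * t2 = 1/18 := by rw [ht1def, ht2def]; nlinarith [hsq2]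
  have Hdf : f V' - f V - finner (gradf V) W
      = (1/4) * (finner (Hf (V + t1•W) W) W + finner (Hf (V + t2•W) W) W) := by
    have h := StmtAux.bregman_f U X lam t1 t2 hsum hprod V W
    rw [hW] at h
    rw [hf, hf, hgradf, hHf, hHf]
    exact h
  have Hdφ : φ₂ V' - φ₂ V - finner (gradφ V) W
      = (1/4) * (finner (Hφ (V + t1•W) W) W + finner (Hφ (V + t2•W) W) W) := by
    have h := StmtAux.bregman_phi lam eps t1 t2 hsum hprod V W
    rw [hW] at h
    rw [hφ, hφ, hgradφ, hHφ, hHφ]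
    exact h
  have A1 := part1 (V + t1•W) W
  have A2 := part1 (V + t2•W) W
  have B1 := part2 (V + t1•W) W
  have B2 := part2 (V + t2•W) W
  constructor
  · rw [Hdf, Hdφ]; linarith
  · rw [Hdf, Hdφ]; linarith
end
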